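/- Let G be a real symmetric 4×4 matrix in emission form with det G < 0, and let K = G⁻¹. Then every diagonal entry of K is strictly negative: K₁₁ < 0, K₂₂ < 0, K₃₃ < 0, K₄₄ < 0. (Geometrically: the natural vectors of emission coordinates are spacelike.) -/

import Mathlib

/-- If `G` is a real symmetric 4×4 matrix in emission form (zero diagonal,
positive off-diagonal) with `det G < 0`, then every diagonal entry of `K = G⁻¹` is
strictly negative: the natural vectors of emission coordinates are spacelike. -/
theorem stmt_6 (G : Matrix (Fin 4) (Fin 4) ℝ)
    (hsymm : G.IsSymm) (hdiag : ∀ i, G i i = 0)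
    (hpos : ∀ i j, i ≠ j → 0 < G i j) (hdet : G.det < 0) :
    ∀ i : Fin 4, G⁻¹ i i < 0 := by
  have hsym : ∀ i j, G j i = G i j := fun i j => hsymm.apply i j
  have ha := hpos 0 1 (by decide)
  have hb := hpos 0 2 (by decide)
  have hc := hpos 0 3 (by decide)
  have hd := hpos 1 2 (by decide)
  have he := hpos 1 3 (by decide)
  have hf := hpos 2 3 (by decide)
  intro i
  rw [Matrix.inv_def, Matrix.smul_apply, smul_eq_mul, Ring.inverse_eq_inv']
  have hadj : 0 < G.adjugate i i := by
    rw [Matrix.adjugate_apply]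
    fin_cases i
    · show (0:ℝ) < (G.updateRow 0 (Pi.single 0 1)).det
      have h : G.updateRow 0 (Pi.single 0 1) =
        !![1,0,0,0; G 0 1, 0, G 1 2, G 1 3; G 0 2, G 1 2, 0, G 2 3; G 0 3, G 1 3, G 2 3, 0] := by
        ext i j
        fin_cases i <;> fin_cases j <;>
          simp [Matrix.updateRow_apply, Pi.single_apply, hdiag, hsym 0 1, hsym 0 2, hsym 0 3,
            hsym 1 2, hsym 1 3, hsym 2 3, Matrix.vecHead, Matrix.vecTail]
      rw [h]
      simp [Matrix.det_succ_row_zero, Fin.sum_univ_succ, Fin.succAbove]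
      nlinarith [mul_pos (mul_pos hd he) hf]
    · show (0:ℝ) < (G.updateRow 1 (Pi.single 1 1)).det
      have h : G.updateRow 1 (Pi.single 1 1) =
        !![0, G 0 1, G 0 2, G 0 3; 0,1,0,0; G 0 2, G 1 2, 0, G 2 3; G 0 3, G 1 3, G 2 3, 0] := by
        ext i j
        fin_cases i <;> fin_cases j <;>
          simp [Matrix.updateRow_apply, Pi.single_apply, hdiag, hsym 0 1, hsym 0 2, hsym 0 3,
            hsym 1 2, hsym 1 3, hsym 2 3, Matrix.vecHead, Matrix.vecTail]
      rw [h]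
      simp [Matrix.det_succ_row_zero, Fin.sum_univ_succ, Fin.succAbove]
      nlinarith [mul_pos (mul_pos hb hc) hf]
    · show (0:ℝ) < (G.updateRow 2 (Pi.single 2 1)).det
      have h : G.updateRow 2 (Pi.single 2 1) =
        !![0, G 0 1, G 0 2, G 0 3; G 0 1, 0, G 1 2, G 1 3; 0,0,1,0; G 0 3, G 1 3, G 2 3, 0] := by
        ext i j
        fin_cases i <;> fin_cases j <;>
          simp [Matrix.updateRow_apply, Pi.single_apply, hdiag, hsym 0 1, hsym 0 2, hsym 0 3,
            hsym 1 2, hsym 1 3, hsym 2 3, Matrix.vecHead, Matrix.vecTail]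
      rw [h]
      simp [Matrix.det_succ_row_zero, Fin.sum_univ_succ, Fin.succAbove]
      nlinarith [mul_pos (mul_pos ha hc) he]
    · show (0:ℝ) < (G.updateRow 3 (Pi.single 3 1)).det
      have h : G.updateRow 3 (Pi.single 3 1) =
        !![0, G 0 1, G 0 2, G 0 3; G 0 1, 0, G 1 2, G 1 3; G 0 2, G 1 2, 0, G 2 3; 0,0,0,1] := by
        ext i j
        fin_cases i <;> fin_cases j <;>
          simp [Matrix.updateRow_apply, Pi.single_apply, hdiag, hsym 0 1, hsym 0 2, hsym 0 3,
            hsym 1 2, hsym 1 3, hsym 2 3, Matrix.vecHead, Matrix.vecTail]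
      rw [h]
      simp [Matrix.det_succ_row_zero, Fin.sum_univ_succ, Fin.succAbove]
      nlinarith [mul_pos (mul_pos ha hb) hd]
  exact mul_neg_of_neg_of_pos (inv_lt_zero.2 hdet) hadj
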